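/- Fix integers m ≥ n ≥ 2. For every nonzero (t,a) ∈ ℝ×ℂ^{m−n} and every nonzero z ∈ ℂ, the following identity of (m+n)×(m+n) complex matrices holds: w_{L_{n−1}−L_n}(z) · w_{L_n}(t,a) · w_{L_{n−1}−L_n}(z)⁻¹ = w_{L_{n−1}}(t·|z|², z·a). -/

import Mathlib

noncomputable section

open Matrix

/-- The `N × N` complex matrix with `(k,l)` entry (1-based) equal to `1`
and all other entries `0`. -/
def EstdC (N k l : ℕ) : Matrix (Fin N) (Fin N) ℂ :=
  Matrix.of fun p q => if p.val + 1 = k ∧ q.val + 1 = l then 1 else 0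

/-- The squared Hermitian norm `|a|²` of `a ∈ ℂ^d`. -/
def hsq (d : ℕ) (a : Fin d → ℂ) : ℝ := ∑ j, Complex.normSq (a j)

/-- `x_{L_i−L_j}(z) = I + z·E_{i,j} − conj(z)·E_{j+n,i+n}`. -/
def xdiffC (m n i j : ℕ) (z : ℂ) : Matrix (Fin (m + n)) (Fin (m + n)) ℂ :=
  1 + z • EstdC (m + n) i j - star z • EstdC (m + n) (j + n) (i + n)

/-- `x_{L_i+L_j}(z) = I + z·E_{i,j+n} − conj(z)·E_{j,i+n}` (for `i < j`). -/
def xplusC (m n i j : ℕ) (z : ℂ) : Matrix (Fin (m + n)) (Fin (m + n)) ℂ :=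
  1 + z • EstdC (m + n) i (j + n) - star z • EstdC (m + n) j (i + n)

/-- `x_{−L_i−L_j}(z) = I + z·E_{j+n,i} − conj(z)·E_{i+n,j}` (for `i < j`). -/
def xnegplusC (m n i j : ℕ) (z : ℂ) : Matrix (Fin (m + n)) (Fin (m + n)) ℂ :=
  1 + z • EstdC (m + n) (j + n) i - star z • EstdC (m + n) (i + n) j

/-- `w_{L_i−L_j}(z) = x_{L_i−L_j}(z) x_{L_j−L_i}(−z⁻¹) x_{L_i−L_j}(z)`. -/
def wdiffC (m n i j : ℕ) (z : ℂ) : Matrix (Fin (m + n)) (Fin (m + n)) ℂ :=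
  xdiffC m n i j z * xdiffC m n j i (-z⁻¹) * xdiffC m n i j z

/-- `w_{L_i+L_j}(z) = x_{L_i+L_j}(z) x_{−L_i−L_j}(−z⁻¹) x_{L_i+L_j}(z)`. -/
def wplusC (m n i j : ℕ) (z : ℂ) : Matrix (Fin (m + n)) (Fin (m + n)) ℂ :=
  xplusC m n i j z * xnegplusC m n i j (-z⁻¹) * xplusC m n i j z

/-- `a₀ = −|a|²/2 + t·i`, for `(t,a) ∈ ℝ × ℂ^d`. -/
def azero (d : ℕ) (t : ℝ) (a : Fin d → ℂ) : ℂ :=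
  ((-(hsq d a) / 2 : ℝ) : ℂ) + (t : ℂ) * Complex.I

/-- `x_{L_i}(t,a) = I + Σ_j (a_j·E_{i,2n+j} − conj(a_j)·E_{2n+j,i+n}) + a₀·E_{i,i+n}`. -/
def xLC (m n i : ℕ) (t : ℝ) (a : Fin (m - n) → ℂ) :
    Matrix (Fin (m + n)) (Fin (m + n)) ℂ :=
  1 + (∑ j : Fin (m - n),
      (a j • EstdC (m + n) i (2 * n + (j.val + 1)) -
        star (a j) • EstdC (m + n) (2 * n + (j.val + 1)) (i + n))) +
    azero (m - n) t a • EstdC (m + n) i (i + n)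

/-- `x_{−L_i}(t,a) = I + Σ_j (a_j·E_{i+n,2n+j} − conj(a_j)·E_{2n+j,i}) + a₀·E_{i+n,i}`. -/
def xnegLC (m n i : ℕ) (t : ℝ) (a : Fin (m - n) → ℂ) :
    Matrix (Fin (m + n)) (Fin (m + n)) ℂ :=
  1 + (∑ j : Fin (m - n),
      (a j • EstdC (m + n) (i + n) (2 * n + (j.val + 1)) -
        star (a j) • EstdC (m + n) (2 * n + (j.val + 1)) i)) +
    azero (m - n) t a • EstdC (m + n) (i + n) i

/-- `w_{L_i}(t,a) = x_{L_i}(t,a) · x_{−L_i}(t/|a₀|², −a₀⁻¹a) · x_{L_i}(t, (conj a₀/a₀)a)`. -/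
def wLC (m n i : ℕ) (t : ℝ) (a : Fin (m - n) → ℂ) :
    Matrix (Fin (m + n)) (Fin (m + n)) ℂ :=
  xLC m n i t a *
    xnegLC m n i (t / Complex.normSq (azero (m - n) t a))
      ((-(azero (m - n) t a)⁻¹) • a) *
    xLC m n i t ((star (azero (m - n) t a) / azero (m - n) t a) • a)

def BB {N : ℕ} (p q : Fin N) : Matrix (Fin N) (Fin N) ℂ := single p q 1

lemma BB_mul_same {N : ℕ} (p q s : Fin N) : BB p q * BB q s = BB p s := by simp [BB]

lemma BB_mul_ne {N : ℕ} {q r : Fin N} (p s : Fin N) (h : q ≠ r) : BB p q * BB r s = 0 :=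
  by simp [BB, h]

variable {N dd : ℕ}

def Srow (τ : Fin dd → Fin N) (a : Fin dd → ℂ) (p : Fin N) : Matrix (Fin N) (Fin N) ℂ :=
  ∑ j, a j • BB p (τ j)

def Tcol (τ : Fin dd → Fin N) (a : Fin dd → ℂ) (p : Fin N) : Matrix (Fin N) (Fin N) ℂ :=
  ∑ j, star (a j) • BB (τ j) p

def DD (τ : Fin dd → Fin N) (a : Fin dd → ℂ) : Matrix (Fin N) (Fin N) ℂ :=
  ∑ j, ∑ k, (star (a j) * a k) • BB (τ j) (τ k)

variable {τ : Fin dd → Fin N} {a : Fin dd → ℂ}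

lemma BBτ (hτ : Function.Injective τ) (p q : Fin N) (j k : Fin dd) :
    BB p (τ j) * BB (τ k) q = if j = k then BB p q else 0 := by
  rcases eq_or_ne j k with h | h
  · subst h; simp [BB_mul_same]
  · simp [h, BB_mul_ne _ _ (fun hh => h (hτ hh))]

lemma Srow_mul_Tcol (hτ : Function.Injective τ) (p q : Fin N) :
    Srow τ a p * Tcol τ a q = (∑ j, star (a j) * a j) • BB p q := by
  rw [Srow, Tcol, Finset.sum_mul]
  simp only [Finset.mul_sum, Matrix.smul_mul, Matrix.mul_smul, smul_smul, BBτ hτ,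
    smul_ite, smul_zero, Finset.sum_ite_eq, Finset.sum_ite_eq', Finset.mem_univ, if_true]
  rw [← Finset.sum_smul]

lemma Tcol_mul_Srow_same (hτ : Function.Injective τ) (p : Fin N) :
    Tcol τ a p * Srow τ a p = DD τ a := by
  rw [Tcol, Srow, Finset.sum_mul, DD]
  refine Finset.sum_congr rfl fun j _ => ?_
  simp only [Finset.mul_sum, Matrix.smul_mul, Matrix.mul_smul, smul_smul, BB_mul_same]
  exact Finset.sum_congr rfl fun k _ => by rw [mul_comm]

lemma Tcol_mul_Srow_ne {p q : Fin N} (h : p ≠ q) :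
    Tcol τ a p * Srow τ a q = 0 := by
  rw [Tcol, Srow, Finset.sum_mul]
  refine Finset.sum_eq_zero fun j _ => ?_
  simp only [Finset.mul_sum, Matrix.smul_mul, Matrix.mul_smul, smul_smul,
    BB_mul_ne _ _ h, smul_zero, Finset.sum_const_zero]

lemma BB_mul_Srow_same (p q : Fin N) : BB p q * Srow τ a q = Srow τ a p := by
  rw [Srow, Srow, Finset.mul_sum]
  exact Finset.sum_congr rfl fun j _ => by rw [Matrix.mul_smul, BB_mul_same]

lemma BB_mul_Srow_ne {q r : Fin N} {p : Fin N} (h : q ≠ r) : BB p q * Srow τ a r = 0 := by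
  rw [Srow, Finset.mul_sum]
  exact Finset.sum_eq_zero fun j _ => by rw [Matrix.mul_smul, BB_mul_ne _ _ h, smul_zero]

lemma Tcol_mul_BB_same (p q : Fin N) : Tcol τ a p * BB p q = Tcol τ a q := by
  rw [Tcol, Tcol, Finset.sum_mul]
  exact Finset.sum_congr rfl fun j _ => by rw [Matrix.smul_mul, BB_mul_same]

lemma Tcol_mul_BB_ne {p r : Fin N} {q : Fin N} (h : p ≠ r) : Tcol τ a p * BB r q = 0 := by
  rw [Tcol, Finset.sum_mul]
  exact Finset.sum_eq_zero fun j _ => by rw [Matrix.smul_mul, BB_mul_ne _ _ h, smul_zero]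

lemma Srow_mul_BB {q : Fin N} (hq : ∀ j, τ j ≠ q) {p r : Fin N} : Srow τ a p * BB q r = 0 := by
  rw [Srow, Finset.sum_mul]
  exact Finset.sum_eq_zero fun j _ => by rw [Matrix.smul_mul, BB_mul_ne _ _ (hq j), smul_zero]

lemma BB_mul_Tcol {q : Fin N} (hq : ∀ j, τ j ≠ q) {p r : Fin N} : BB p q * Tcol τ a r = 0 := by
  rw [Tcol, Finset.mul_sum]
  exact Finset.sum_eq_zero fun j _ =>
    by rw [Matrix.mul_smul, BB_mul_ne _ _ (Ne.symm (hq j)), smul_zero]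

lemma Srow_mul_Srow {q : Fin N} (hq : ∀ j, τ j ≠ q) {p : Fin N} :
    Srow τ a p * Srow τ a q = 0 := by
  nth_rewrite 2 [Srow]
  rw [Finset.mul_sum]
  exact Finset.sum_eq_zero fun j _ => by rw [Matrix.mul_smul, Srow_mul_BB hq, smul_zero]

lemma Tcol_mul_Tcol {p : Fin N} (hp : ∀ j, τ j ≠ p) {q : Fin N} :
    Tcol τ a p * Tcol τ a q = 0 := by
  nth_rewrite 1 [Tcol]
  rw [Finset.sum_mul]
  exact Finset.sum_eq_zero fun j _ => by rw [Matrix.smul_mul, BB_mul_Tcol hp, smul_zero]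

lemma Srow_mul_DD (hτ : Function.Injective τ) (p q : Fin N) :
    Srow τ a p * DD τ a = (∑ j, star (a j) * a j) • Srow τ a p := by
  rw [← Tcol_mul_Srow_same hτ q, ← mul_assoc, Srow_mul_Tcol hτ, Matrix.smul_mul,
    BB_mul_Srow_same]

lemma DD_mul_Tcol (hτ : Function.Injective τ) (p q : Fin N) :
    DD τ a * Tcol τ a p = (∑ j, star (a j) * a j) • Tcol τ a p := by
  rw [← Tcol_mul_Srow_same hτ q, mul_assoc, Srow_mul_Tcol hτ, Matrix.mul_smul,
    Tcol_mul_BB_same]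

lemma DD_mul_DD (hτ : Function.Injective τ) (q : Fin N) :
    DD τ a * DD τ a = (∑ j, star (a j) * a j) • DD τ a := by
  conv_lhs => rw [← Tcol_mul_Srow_same hτ q]
  rw [mul_assoc, ← mul_assoc (Srow τ a q), Srow_mul_Tcol hτ, Matrix.smul_mul,
    BB_mul_Srow_same, Matrix.mul_smul, Tcol_mul_Srow_same hτ]

lemma DD_mul_Srow {q : Fin N} (hτ : Function.Injective τ) (hq : ∀ j, τ j ≠ q) :
    DD τ a * Srow τ a q = 0 := by
  rw [← Tcol_mul_Srow_same hτ q, mul_assoc, Srow_mul_Srow hq, mul_zero]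

lemma Tcol_mul_DD {q : Fin N} (hτ : Function.Injective τ) (hq : ∀ j, τ j ≠ q) :
    Tcol τ a q * DD τ a = 0 := by
  rw [← Tcol_mul_Srow_same hτ q, ← mul_assoc, Tcol_mul_Tcol hq, zero_mul]

lemma BB_mul_DD {q : Fin N} (hτ : Function.Injective τ) (hq : ∀ j, τ j ≠ q) {p : Fin N} :
    BB p q * DD τ a = 0 := by
  rw [← Tcol_mul_Srow_same hτ q, ← mul_assoc, BB_mul_Tcol hq, zero_mul]

lemma DD_mul_BB {q : Fin N} (hτ : Function.Injective τ) (hq : ∀ j, τ j ≠ q) {p : Fin N} :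
    DD τ a * BB q p = 0 := by
  rw [← Tcol_mul_Srow_same hτ q, mul_assoc, Srow_mul_BB hq, mul_zero]

def xg (u v : Fin N) (τ : Fin dd → Fin N) (c₀ : ℂ) (c : Fin dd → ℂ) :
    Matrix (Fin N) (Fin N) ℂ :=
  1 + (∑ j, (c j • BB u (τ j) + (-(star (c j))) • BB (τ j) v)) + c₀ • BB u v

lemma xg_decomp (p q : Fin N) (c₀ w : ℂ) :
    xg p q τ c₀ (w • a) =
      1 + w • Srow τ a p + (-(star w)) • Tcol τ a q + c₀ • BB p q := by
  rw [xg]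
  have : (∑ j, ((w • a) j • BB p (τ j) + (-(star ((w • a) j))) • BB (τ j) q))
      = w • Srow τ a p + (-(star w)) • Tcol τ a q := by
    rw [Finset.sum_add_distrib, Srow, Tcol, Finset.smul_sum, Finset.smul_sum]
    congr 1
    · exact Finset.sum_congr rfl fun j _ => by simp [smul_smul]
    · refine Finset.sum_congr rfl fun j _ => ?_
      rw [smul_smul, Pi.smul_apply, smul_eq_mul, star_mul']
      ring_nf
  rw [this]
  abel

lemma xg_decomp' (p q : Fin N) (c₀ : ℂ) :
    xg p q τ c₀ a =
      1 + (1:ℂ) • Srow τ a p + (-1 : ℂ) • Tcol τ a q + c₀ • BB p q := by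
  have := xg_decomp (τ := τ) (a := a) p q c₀ 1
  simpa using this

lemma L3 {u v : Fin N} (hτ : Function.Injective τ) (huv : u ≠ v)
    (hτu : ∀ j, τ j ≠ u) (hτv : ∀ j, τ j ≠ v)
    {α : ℂ} (hα : α ≠ 0)
    (hrel : α + star α + ∑ j, star (a j) * a j = 0) :
    xg u v τ α a * xg v u τ (star α)⁻¹ ((-α⁻¹) • a) * xg u v τ α ((star α / α) • a)
      = 1 + (-1:ℂ)•BB u u + (-1:ℂ)•BB v v + α•BB u v + (star α)⁻¹•BB v u
          + α⁻¹ • DD τ a := by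
  have hsα : (starRingEnd ℂ) α ≠ 0 := by simpa using star_ne_zero.2 hα
  have hsα' : star α ≠ 0 := star_ne_zero.2 hα
  rw [xg_decomp' u v α, xg_decomp v u ((star α)⁻¹) (-α⁻¹), xg_decomp u v α (star α / α)]
  simp only [star_neg, star_inv₀, star_div₀, star_star, neg_neg]
  simp only [mul_add, add_mul, one_mul, mul_one, Matrix.mul_smul, Matrix.smul_mul, smul_smul,
    BB_mul_same, BB_mul_ne _ _ huv, BB_mul_ne _ _ huv.symm,
    Srow_mul_Tcol hτ, Tcol_mul_Srow_same hτ, Tcol_mul_Srow_ne huv, Tcol_mul_Srow_ne huv.symm,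
    BB_mul_Srow_same, BB_mul_Srow_ne huv, BB_mul_Srow_ne huv.symm,
    Tcol_mul_BB_same, Tcol_mul_BB_ne huv, Tcol_mul_BB_ne huv.symm,
    Srow_mul_BB hτu, Srow_mul_BB hτv, BB_mul_Tcol hτu, BB_mul_Tcol hτv,
    Srow_mul_Srow hτu, Srow_mul_Srow hτv, Tcol_mul_Tcol hτu, Tcol_mul_Tcol hτv,
    Srow_mul_DD hτ u u, Srow_mul_DD hτ v u, DD_mul_Tcol hτ u u, DD_mul_Tcol hτ v u,
    DD_mul_DD hτ u,
    DD_mul_Srow hτ hτu, DD_mul_Srow hτ hτv, Tcol_mul_DD hτ hτu, Tcol_mul_DD hτ hτv,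
    BB_mul_DD hτ hτu, BB_mul_DD hτ hτv, DD_mul_BB hτ hτu, DD_mul_BB hτ hτv,
    smul_zero, zero_mul, mul_zero, add_zero, zero_add]
  have hσ : ∑ j, star (a j) * a j = -α - star α := by linear_combination hrel
  simp only [hσ]
  match_scalars <;> field_simp <;> ring

def Wf (z : ℂ) (a b c d : Fin N) : Matrix (Fin N) (Fin N) ℂ :=
  1 + (-1:ℂ)•BB a a + (-1:ℂ)•BB b b + (-1:ℂ)•BB c c + (-1:ℂ)•BB d d
    + z•BB a b + (-z⁻¹)•BB b a + (star z)⁻¹•BB c d + (-(star z))•BB d c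

def MF (u v : Fin N) (τ : Fin dd → Fin N) (α : ℂ) (a : Fin dd → ℂ) :
    Matrix (Fin N) (Fin N) ℂ :=
  1 + (-1:ℂ)•BB u u + (-1:ℂ)•BB v v + α•BB u v + (star α)⁻¹•BB v u + α⁻¹ • DD τ a

lemma DD_smul (z : ℂ) : DD τ (z • a) = (star z * z) • DD τ a := by
  rw [DD, DD, Finset.smul_sum]
  refine Finset.sum_congr rfl fun j _ => ?_
  rw [Finset.smul_sum]
  refine Finset.sum_congr rfl fun k _ => ?_
  rw [smul_smul]
  congr 1
  simp only [Pi.smul_apply, smul_eq_mul, star_mul']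
  ring

lemma L1 (z : ℂ) (hz : z ≠ 0) (a b c d : Fin N)
    (hab : a ≠ b) (hac : a ≠ c) (had : a ≠ d) (hbc : b ≠ c) (hbd : b ≠ d) (hcd : c ≠ d) :
    (1 + z•BB a b + (-(star z))•BB d c) *
      (1 + (-z⁻¹)•BB b a + (star z)⁻¹•BB c d) *
      (1 + z•BB a b + (-(star z))•BB d c) = Wf z a b c d := by
  have hsz : (starRingEnd ℂ) z ≠ 0 := by simpa using star_ne_zero.2 hz
  have hsz' : star z ≠ 0 := star_ne_zero.2 hz
  rw [Wf]
  simp only [mul_add, add_mul, one_mul, mul_one,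
    Matrix.mul_smul, Matrix.smul_mul, smul_smul,
    BB_mul_same, BB_mul_ne _ _ hab, BB_mul_ne _ _ hab.symm,
    BB_mul_ne _ _ hac, BB_mul_ne _ _ hac.symm, BB_mul_ne _ _ had, BB_mul_ne _ _ had.symm,
    BB_mul_ne _ _ hbc, BB_mul_ne _ _ hbc.symm, BB_mul_ne _ _ hbd, BB_mul_ne _ _ hbd.symm,
    BB_mul_ne _ _ hcd, BB_mul_ne _ _ hcd.symm,
    smul_zero, add_zero, zero_add]
  match_scalars <;> field_simp <;> ring

lemma L2 (z : ℂ) (hz : z ≠ 0) (a b c d : Fin N)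
    (hab : a ≠ b) (hac : a ≠ c) (had : a ≠ d) (hbc : b ≠ c) (hbd : b ≠ d) (hcd : c ≠ d) :
    Wf z a b c d * Wf (-z) a b c d = 1 := by
  have hsz : (starRingEnd ℂ) z ≠ 0 := by simpa using star_ne_zero.2 hz
  have hsz' : star z ≠ 0 := star_ne_zero.2 hz
  rw [Wf, Wf]
  simp only [star_neg]
  simp only [mul_add, add_mul, one_mul, mul_one,
    Matrix.mul_smul, Matrix.smul_mul, smul_smul,
    BB_mul_same, BB_mul_ne _ _ hab, BB_mul_ne _ _ hab.symm,
    BB_mul_ne _ _ hac, BB_mul_ne _ _ hac.symm, BB_mul_ne _ _ had, BB_mul_ne _ _ had.symm,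
    BB_mul_ne _ _ hbc, BB_mul_ne _ _ hbc.symm, BB_mul_ne _ _ hbd, BB_mul_ne _ _ hbd.symm,
    BB_mul_ne _ _ hcd, BB_mul_ne _ _ hcd.symm,
    smul_zero, add_zero, zero_add]
  match_scalars <;> field_simp <;> ring

lemma L4 {A1 A2 A3 A4 : Fin N} (hτ : Function.Injective τ)
    (h12 : A1 ≠ A2) (h13 : A1 ≠ A3) (h14 : A1 ≠ A4)
    (h23 : A2 ≠ A3) (h24 : A2 ≠ A4) (h34 : A3 ≠ A4)
    (hτ1 : ∀ j, τ j ≠ A1) (hτ2 : ∀ j, τ j ≠ A2)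
    (hτ3 : ∀ j, τ j ≠ A3) (hτ4 : ∀ j, τ j ≠ A4)
    (z α : ℂ) (hz : z ≠ 0) (hα : α ≠ 0) :
    Wf z A1 A2 A3 A4 * MF A2 A4 τ α a * Wf (-z) A1 A2 A3 A4
      = MF A1 A3 τ ((star z * z) * α) (z • a) := by
  have hsz : (starRingEnd ℂ) z ≠ 0 := by simpa using star_ne_zero.2 hz
  have hsz' : star z ≠ 0 := star_ne_zero.2 hz
  have hsα : (starRingEnd ℂ) α ≠ 0 := by simpa using star_ne_zero.2 hα
  have hsα' : star α ≠ 0 := star_ne_zero.2 hα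
  rw [Wf, Wf, MF, MF, DD_smul]
  simp only [mul_add, add_mul, one_mul, mul_one,
    Matrix.mul_smul, Matrix.smul_mul, smul_smul,
    BB_mul_same, BB_mul_ne _ _ h12, BB_mul_ne _ _ h12.symm,
    BB_mul_ne _ _ h13, BB_mul_ne _ _ h13.symm, BB_mul_ne _ _ h14, BB_mul_ne _ _ h14.symm,
    BB_mul_ne _ _ h23, BB_mul_ne _ _ h23.symm, BB_mul_ne _ _ h24, BB_mul_ne _ _ h24.symm,
    BB_mul_ne _ _ h34, BB_mul_ne _ _ h34.symm,
    BB_mul_DD hτ hτ1, BB_mul_DD hτ hτ2, BB_mul_DD hτ hτ3, BB_mul_DD hτ hτ4,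
    DD_mul_BB hτ hτ1, DD_mul_BB hτ hτ2, DD_mul_BB hτ hτ3, DD_mul_BB hτ hτ4,
    smul_zero, zero_mul, mul_zero, add_zero, zero_add]
  simp only [star_mul', star_star, star_neg, star_inv₀, _root_.map_mul, neg_neg, inv_neg]
  match_scalars <;> field_simp <;> ring

lemma hsq_smul (d : ℕ) (w : ℂ) (a : Fin d → ℂ) :
    hsq d (w • a) = Complex.normSq w * hsq d a := by
  simp only [hsq, Pi.smul_apply, smul_eq_mul, Complex.normSq_mul, Finset.mul_sum]

lemma azero_ne_zero {d : ℕ} {t : ℝ} {a : Fin d → ℂ} (hta : ¬(t = 0 ∧ a = 0)) :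
    azero d t a ≠ 0 := by
  intro h
  have hre := congrArg Complex.re h
  have him := congrArg Complex.im h
  simp [azero] at hre him
  apply hta
  refine ⟨him, ?_⟩
  have hs : hsq d a = 0 := by linarith
  have : ∀ j, Complex.normSq (a j) = 0 := by
    intro j
    have := (Finset.sum_eq_zero_iff_of_nonneg
      (fun i _ => Complex.normSq_nonneg (a i))).1 hs j (Finset.mem_univ j)
    exact this
  funext j
  exact Complex.normSq_eq_zero.1 (this j)

lemma azero_rel (d : ℕ) (t : ℝ) (a : Fin d → ℂ) :
    azero d t a + star (azero d t a) + ∑ j, star (a j) * a j = 0 := by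
  have h : ∑ j, star (a j) * a j = ((hsq d a : ℝ) : ℂ) := by
    rw [hsq]
    push_cast
    exact Finset.sum_congr rfl fun j _ => by
      rw [mul_comm, Complex.star_def, Complex.mul_conj]
  rw [h, azero]
  simp [Complex.ext_iff, Complex.star_def]
  try ring

lemma azero_inner1 {d : ℕ} {t : ℝ} {a : Fin d → ℂ} (hα : azero d t a ≠ 0) :
    azero d (t / Complex.normSq (azero d t a)) ((-(azero d t a)⁻¹) • a)
      = (star (azero d t a))⁻¹ := by
  set α := azero d t a with hαdef
  have hns : Complex.normSq α ≠ 0 := (Complex.normSq_pos.2 hα).ne'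
  have h1 : azero d (t / Complex.normSq α) ((-α⁻¹) • a)
      = ((Complex.normSq α : ℝ) : ℂ)⁻¹ * α := by
    rw [azero, hsq_smul, hαdef, azero]
    simp [Complex.ext_iff, Complex.normSq_inv]
    constructor <;> · field_simp; try ring
  rw [h1]
  have hns' : ((Complex.normSq α : ℝ) : ℂ) ≠ 0 := by
    exact_mod_cast Complex.ofReal_ne_zero.2 hns
  have h2 : (star α) * (((Complex.normSq α : ℝ) : ℂ))⁻¹ * α = 1 := by
    rw [mul_comm (star α), mul_assoc, mul_comm (star α), Complex.star_def,
      Complex.mul_conj]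
    field_simp
  symm
  exact inv_eq_of_mul_eq_one_right (by rw [← mul_assoc]; exact h2)

lemma azero_inner2 {d : ℕ} {t : ℝ} {a : Fin d → ℂ} (hα : azero d t a ≠ 0) :
    azero d t ((star (azero d t a) / azero d t a) • a) = azero d t a := by
  set α := azero d t a with hαdef
  have : Complex.normSq (star α / α) = 1 := by
    rw [Complex.normSq_div, Complex.star_def, Complex.normSq_conj,
      div_self ((Complex.normSq_pos.2 hα).ne')]
  rw [azero, hsq_smul, this, one_mul, hαdef, azero]

lemma azero_scale (d : ℕ) (t : ℝ) (a : Fin d → ℂ) (z : ℂ) :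
    azero d (t * Complex.normSq z) (z • a) = (star z * z) * azero d t a := by
  have : (star z * z : ℂ) = ((Complex.normSq z : ℝ) : ℂ) := by
    rw [mul_comm, Complex.star_def, Complex.mul_conj]
  rw [this, azero, hsq_smul, azero]
  simp [Complex.ext_iff]
  constructor <;> ring


lemma EstdC_eq' {N : ℕ} (k l : ℕ) {P Q : Fin N} (hP : P.val + 1 = k) (hQ : Q.val + 1 = l) :
    EstdC N k l = BB P Q := by
  ext p q
  simp only [EstdC, of_apply, BB, single, of_apply]
  have : (p.val + 1 = k ∧ q.val + 1 = l) ↔ (P = p ∧ Q = q) := by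
    simp only [Fin.ext_iff]
    omega
  rw [if_congr this rfl rfl]

lemma xdiffC_eq {m n : ℕ} (i j : ℕ) (z : ℂ) {P Q R S : Fin (m + n)}
    (hP : P.val + 1 = i) (hQ : Q.val + 1 = j) (hR : R.val + 1 = j + n) (hS : S.val + 1 = i + n) :
    xdiffC m n i j z = 1 + z • BB P Q + (-(star z)) • BB R S := by
  rw [xdiffC, EstdC_eq' i j hP hQ, EstdC_eq' (j + n) (i + n) hR hS, sub_eq_add_neg, neg_smul]

lemma xLC_eq {m n : ℕ} (i : ℕ) (t : ℝ) (a : Fin (m - n) → ℂ) {u v : Fin (m + n)}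
    {τ : Fin (m - n) → Fin (m + n)}
    (hu : u.val + 1 = i) (hv : v.val + 1 = i + n)
    (hτ : ∀ j : Fin (m - n), (τ j).val + 1 = 2 * n + (j.val + 1)) :
    xLC m n i t a = xg u v τ (azero (m - n) t a) a := by
  rw [xLC, xg, EstdC_eq' i (i + n) hu hv]
  congr 1
  congr 1
  refine Finset.sum_congr rfl fun j _ => ?_
  rw [EstdC_eq' i (2 * n + (j.val + 1)) hu (hτ j),
    EstdC_eq' (2 * n + (j.val + 1)) (i + n) (hτ j) hv, sub_eq_add_neg, neg_smul]

lemma xnegLC_eq {m n : ℕ} (i : ℕ) (t : ℝ) (a : Fin (m - n) → ℂ) {u v : Fin (m + n)}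
    {τ : Fin (m - n) → Fin (m + n)}
    (hu : u.val + 1 = i) (hv : v.val + 1 = i + n)
    (hτ : ∀ j : Fin (m - n), (τ j).val + 1 = 2 * n + (j.val + 1)) :
    xnegLC m n i t a = xg v u τ (azero (m - n) t a) a := by
  rw [xnegLC, xg, EstdC_eq' (i + n) i hv hu]
  congr 1
  congr 1
  refine Finset.sum_congr rfl fun j _ => ?_
  rw [EstdC_eq' (i + n) (2 * n + (j.val + 1)) hv (hτ j),
    EstdC_eq' (2 * n + (j.val + 1)) i (hτ j) hu, sub_eq_add_neg, neg_smul]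

lemma wdiffC_eq {m n : ℕ} (z : ℂ) (hz : z ≠ 0) {A1 A2 A3 A4 : Fin (m + n)}
    (hA1 : A1.val + 1 = n - 1) (hA2 : A2.val + 1 = n)
    (hA3 : A3.val + 1 = (n - 1) + n) (hA4 : A4.val + 1 = n + n)
    (h12 : A1 ≠ A2) (h13 : A1 ≠ A3) (h14 : A1 ≠ A4)
    (h23 : A2 ≠ A3) (h24 : A2 ≠ A4) (h34 : A3 ≠ A4) :
    wdiffC m n (n - 1) n z = Wf z A1 A2 A3 A4 := by
  rw [wdiffC, xdiffC_eq (n - 1) n z hA1 hA2 hA4 hA3,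
    xdiffC_eq n (n - 1) (-z⁻¹) hA2 hA1 hA3 hA4]
  have hs : (-(star (-z⁻¹)) : ℂ) = (star z)⁻¹ := by
    simp [star_neg, star_inv₀]
  rw [hs]
  exact L1 z hz A1 A2 A3 A4 h12 h13 h14 h23 h24 h34

lemma wLC_eq {m n : ℕ} (i : ℕ) (t : ℝ) (a : Fin (m - n) → ℂ)
    (hta : ¬(t = 0 ∧ a = 0)) {u v : Fin (m + n)} {τ : Fin (m - n) → Fin (m + n)}
    (hu : u.val + 1 = i) (hv : v.val + 1 = i + n)
    (hτ : ∀ j : Fin (m - n), (τ j).val + 1 = 2 * n + (j.val + 1))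
    (hτinj : Function.Injective τ) (huv : u ≠ v)
    (hτu : ∀ j, τ j ≠ u) (hτv : ∀ j, τ j ≠ v) :
    wLC m n i t a = MF u v τ (azero (m - n) t a) a := by
  have hα : azero (m - n) t a ≠ 0 := azero_ne_zero hta
  rw [wLC, xLC_eq i t a hu hv hτ,
    xnegLC_eq i (t / Complex.normSq (azero (m - n) t a))
      ((-(azero (m - n) t a)⁻¹) • a) hu hv hτ,
    xLC_eq i t ((star (azero (m - n) t a) / azero (m - n) t a) • a) hu hv hτ,
    azero_inner1 hα, azero_inner2 hα, MF]
  exact L3 hτinj huv hτu hτv hα (azero_rel (m - n) t a)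

/-- **Item 5 of Lemma 7.10 of the paper, in `SU(m,n)`**:
`w_{L_{n−1}−L_n}(z) · w_{L_n}(t,a) · w_{L_{n−1}−L_n}(z)⁻¹ = w_{L_{n−1}}(t|z|², z·a)`. -/
theorem wdiffC_conj_wLC (m n : ℕ) (hmn : n ≤ m) (hn : 2 ≤ n)
    (t : ℝ) (a : Fin (m - n) → ℂ) (hta : ¬(t = 0 ∧ a = 0))
    (z : ℂ) (hz : z ≠ 0) :
    wdiffC m n (n - 1) n z * wLC m n n t a * (wdiffC m n (n - 1) n z)⁻¹ =
      wLC m n (n - 1) (t * Complex.normSq z) (z • a) := by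
  obtain ⟨A1, hA1⟩ : ∃ A : Fin (m + n), A.val + 1 = n - 1 :=
    ⟨⟨n - 2, by omega⟩, show n - 2 + 1 = n - 1 by omega⟩
  obtain ⟨A2, hA2⟩ : ∃ A : Fin (m + n), A.val + 1 = n :=
    ⟨⟨n - 1, by omega⟩, show n - 1 + 1 = n by omega⟩
  obtain ⟨A3, hA3⟩ : ∃ A : Fin (m + n), A.val + 1 = (n - 1) + n :=
    ⟨⟨2 * n - 2, by omega⟩, show 2 * n - 2 + 1 = (n - 1) + n by omega⟩
  obtain ⟨A4, hA4⟩ : ∃ A : Fin (m + n), A.val + 1 = n + n :=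
    ⟨⟨2 * n - 1, by omega⟩, show 2 * n - 1 + 1 = n + n by omega⟩
  obtain ⟨τ, hτ⟩ : ∃ τ : Fin (m - n) → Fin (m + n),
      ∀ j, (τ j).val + 1 = 2 * n + (j.val + 1) :=
    ⟨fun j => ⟨2 * n + j.val, by omega⟩, fun j => rfl⟩
  have hτinj : Function.Injective τ := by
    intro j k h
    have h' := congrArg Fin.val h
    have hj := hτ j; have hk := hτ k
    exact Fin.ext (by omega)
  have h12 : A1 ≠ A2 := fun h => by have := congrArg Fin.val h; omega
  have h13 : A1 ≠ A3 := fun h => by have := congrArg Fin.val h; omega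
  have h14 : A1 ≠ A4 := fun h => by have := congrArg Fin.val h; omega
  have h23 : A2 ≠ A3 := fun h => by have := congrArg Fin.val h; omega
  have h24 : A2 ≠ A4 := fun h => by have := congrArg Fin.val h; omega
  have h34 : A3 ≠ A4 := fun h => by have := congrArg Fin.val h; omega
  have hτ1 : ∀ j, τ j ≠ A1 := fun j h => by
    have := congrArg Fin.val h; have := hτ j; omega
  have hτ2 : ∀ j, τ j ≠ A2 := fun j h => by
    have := congrArg Fin.val h; have := hτ j; omega
  have hτ3 : ∀ j, τ j ≠ A3 := fun j h => by
    have := congrArg Fin.val h; have := hτ j; omega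
  have hτ4 : ∀ j, τ j ≠ A4 := fun j h => by
    have := congrArg Fin.val h; have := hτ j; omega
  have hα : azero (m - n) t a ≠ 0 := azero_ne_zero hta
  have hta' : ¬(t * Complex.normSq z = 0 ∧ z • a = 0) := by
    rintro ⟨h1, h2⟩
    apply hta
    have hnz : Complex.normSq z ≠ 0 := (Complex.normSq_pos.2 hz).ne'
    constructor
    · rcases mul_eq_zero.1 h1 with h | h
      · exact h
      · exact absurd h hnz
    · funext j
      have := congrFun h2 j
      simpa [hz] using this
  rw [wdiffC_eq z hz hA1 hA2 hA3 hA4 h12 h13 h14 h23 h24 h34,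
    wLC_eq n t a hta hA2 hA4 hτ hτinj h24 hτ2 hτ4,
    Matrix.inv_eq_right_inv (L2 z hz A1 A2 A3 A4 h12 h13 h14 h23 h24 h34),
    wLC_eq (n - 1) (t * Complex.normSq z) (z • a) hta' hA1 hA3 hτ hτinj h13 hτ1 hτ3,
    azero_scale]
  exact L4 hτinj h12 h13 h14 h23 h24 h34 hτ1 hτ2 hτ3 hτ4 z (azero (m - n) t a) hz hα
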